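/- Let y^{(1)},...,y^{(r)} ∈ {0,1}^n be indicator vectors of r pairwise disjoint subsets of [n], each of size k ≥ 1, and let Y* = Σ_{i=1}^r (y^{(i)})^{⊗m}. Then the tensor spectral norm of Y* equals k^{m/2}. -/

import Mathlib

open scoped BigOperators

noncomputable section

def tInner {n m : ℕ} (A B : (Fin m → Fin n) → ℝ) : ℝ :=
  ∑ i : Fin m → Fin n, A i * B i

def rankOne (n m : ℕ) (u : EuclideanSpace ℝ (Fin n)) : (Fin m → Fin n) → ℝ :=
  fun i => ∏ j : Fin m, u (i j)

def specNorm {n m : ℕ} (A : (Fin m → Fin n) → ℝ) : ℝ :=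
  sSup {x | ∃ u : EuclideanSpace ℝ (Fin n), ‖u‖ = 1 ∧ x = |tInner A (rankOne n m u)|}

theorem specNorm_agreement (n r k m : ℕ) (hr : 1 ≤ r) (hk : 1 ≤ k) (hm : 2 ≤ m)
    (y : Fin r → Fin n → ℝ)
    (h01 : ∀ i j, y i j = 0 ∨ y i j = 1)
    (hdisj : ∀ i i', i ≠ i' → ∀ j, y i j * y i' j = 0)
    (hsize : ∀ i, ∑ j : Fin n, y i j = (k : ℝ)) :
    specNorm (fun idx : Fin m → Fin n => ∑ i : Fin r, ∏ t : Fin m, y i (idx t)) =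
      (k : ℝ) ^ ((m : ℝ) / 2) := by
  have hk0 : (0:ℝ) < (k:ℝ) := by exact_mod_cast hk
  set K := Real.sqrt k with hKdef
  have hK0 : 0 < K := Real.sqrt_pos.mpr hk0
  have hK2 : K ^ 2 = (k:ℝ) := Real.sq_sqrt hk0.le
  have hKm : K ^ m = (k : ℝ) ^ ((m : ℝ) / 2) := by
    rw [hKdef, ← Real.rpow_natCast (Real.sqrt k) m, Real.sqrt_eq_rpow,
      ← Real.rpow_mul hk0.le]
    ring_nf
  have hy0 : ∀ i j, 0 ≤ y i j := fun i j => by rcases h01 i j with h | h <;> simp [h]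
  have hy2 : ∀ i j, y i j ^ 2 = y i j := fun i j => by rcases h01 i j with h | h <;> simp [h]
  -- key computation of the inner product
  have key : ∀ u : EuclideanSpace ℝ (Fin n),
      tInner (fun idx : Fin m → Fin n => ∑ i : Fin r, ∏ t : Fin m, y i (idx t)) (rankOne n m u)
        = ∑ i : Fin r, (∑ j : Fin n, y i j * u j) ^ m := by
    intro u
    unfold tInner rankOne
    simp_rw [Finset.sum_mul, ← Finset.prod_mul_distrib]
    rw [Finset.sum_comm]
    exact Finset.sum_congr rfl fun i _ => (Fintype.sum_pow (fun j => y i j * u j) m).symm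
  -- norm condition gives sum of squares 1
  have hnorm : ∀ u : EuclideanSpace ℝ (Fin n), ‖u‖ = 1 → ∑ j : Fin n, (u j) ^ 2 = 1 := by
    intro u hu
    rw [EuclideanSpace.norm_eq] at hu
    have := Real.sqrt_eq_one.mp hu
    simpa [sq_abs] using this
  -- a row sum over i of y i j is at most 1
  have hcol : ∀ j, (∑ i : Fin r, y i j) ≤ 1 := by
    intro j
    by_cases h : ∃ i0 : Fin r, y i0 j = 1
    · obtain ⟨i0, hi0⟩ := h
      have : (∑ i : Fin r, y i j) = y i0 j := by
        refine Finset.sum_eq_single i0 (fun b _ hb => ?_) (by simp)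
        have := hdisj b i0 hb j
        rw [hi0, mul_one] at this
        exact this
      rw [this, hi0]
    · push_neg at h
      have : ∀ i : Fin r, y i j = 0 := fun i => (h01 i j).resolve_right (h i)
      simp [this]
  -- upper bound
  have ub : ∀ u : EuclideanSpace ℝ (Fin n), ‖u‖ = 1 →
      |∑ i : Fin r, (∑ j : Fin n, y i j * u j) ^ m| ≤ K ^ m := by
    intro u hu
    have husq := hnorm u hu
    set q : Fin r → ℝ := fun i => ∑ j : Fin n, y i j * (u j) ^ 2 with hq
    have hq0 : ∀ i, 0 ≤ q i := fun i =>
      Finset.sum_nonneg fun j _ => mul_nonneg (hy0 i j) (sq_nonneg _)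
    have hqsum : (∑ i : Fin r, q i) ≤ 1 := by
      rw [hq]
      rw [Finset.sum_comm]
      calc (∑ j : Fin n, ∑ i : Fin r, y i j * (u j) ^ 2)
          = ∑ j : Fin n, (∑ i : Fin r, y i j) * (u j) ^ 2 := by
            simp [Finset.sum_mul]
        _ ≤ ∑ j : Fin n, 1 * (u j) ^ 2 := by
            refine Finset.sum_le_sum fun j _ => ?_
            exact mul_le_mul_of_nonneg_right (hcol j) (sq_nonneg _)
        _ = 1 := by simp [husq]
    have hq1 : ∀ i, q i ≤ 1 := by
      intro i
      calc q i ≤ ∑ i' : Fin r, q i' :=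
            Finset.single_le_sum (fun i' _ => hq0 i') (Finset.mem_univ i)
        _ ≤ 1 := hqsum
    have hCS : ∀ i, (∑ j : Fin n, y i j * u j) ^ 2 ≤ (k:ℝ) * q i := by
      intro i
      have h1 : (∑ j : Fin n, y i j * u j) = ∑ j : Fin n, y i j * (y i j * u j) := by
        refine Finset.sum_congr rfl fun j _ => ?_
        rw [← mul_assoc, ← sq, hy2]
      rw [h1]
      calc (∑ j : Fin n, y i j * (y i j * u j)) ^ 2
          ≤ (∑ j : Fin n, (y i j) ^ 2) * ∑ j : Fin n, (y i j * u j) ^ 2 :=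
            Finset.sum_mul_sq_le_sq_mul_sq _ _ _
        _ = (k:ℝ) * q i := by
            congr 1
            · simp only [hy2]; exact hsize i
            · refine Finset.sum_congr rfl fun j _ => ?_
              rw [mul_pow, hy2]
    calc |∑ i : Fin r, (∑ j : Fin n, y i j * u j) ^ m|
        ≤ ∑ i : Fin r, |(∑ j : Fin n, y i j * u j) ^ m| := Finset.abs_sum_le_sum_abs _ _
      _ = ∑ i : Fin r, |∑ j : Fin n, y i j * u j| ^ m := by simp [abs_pow]
      _ ≤ ∑ i : Fin r, (K * Real.sqrt (q i)) ^ m := by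
          refine Finset.sum_le_sum fun i _ => ?_
          refine pow_le_pow_left₀ (abs_nonneg _) ?_ m
          have h2 : |∑ j : Fin n, y i j * u j| ^ 2 ≤ (K * Real.sqrt (q i)) ^ 2 := by
            rw [mul_pow, hK2, Real.sq_sqrt (hq0 i), sq_abs]
            exact hCS i
          have h3 : 0 ≤ K * Real.sqrt (q i) :=
            mul_nonneg hK0.le (Real.sqrt_nonneg _)
          exact abs_le_of_sq_le_sq' h2 h3 |>.2
      _ = ∑ i : Fin r, K ^ m * Real.sqrt (q i) ^ m := by simp [mul_pow]
      _ ≤ ∑ i : Fin r, K ^ m * q i := by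
          refine Finset.sum_le_sum fun i _ => ?_
          refine mul_le_mul_of_nonneg_left ?_ (pow_nonneg hK0.le m)
          have hs1 : Real.sqrt (q i) ≤ 1 := Real.sqrt_le_one.mpr (hq1 i)
          calc Real.sqrt (q i) ^ m ≤ Real.sqrt (q i) ^ 2 :=
                pow_le_pow_of_le_one (Real.sqrt_nonneg _) hs1 hm
            _ = q i := Real.sq_sqrt (hq0 i)
      _ = K ^ m * ∑ i : Fin r, q i := by rw [Finset.mul_sum]
      _ ≤ K ^ m * 1 := mul_le_mul_of_nonneg_left hqsum (pow_nonneg hK0.le m)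
      _ = K ^ m := mul_one _
  -- the witness
  have i0 : Fin r := ⟨0, hr⟩
  set w : EuclideanSpace ℝ (Fin n) := WithLp.toLp 2 (fun j => y i0 j / K : Fin n → ℝ) with hw
  have hwnorm : ‖w‖ = 1 := by
    rw [EuclideanSpace.norm_eq]
    have : ∑ j : Fin n, ‖w j‖ ^ 2 = 1 := by
      have : ∀ j, ‖w j‖ ^ 2 = y i0 j / (k:ℝ) := by
        intro j
        rw [Real.norm_eq_abs, sq_abs, hw]
        simp only [div_pow, hy2, hK2]
      simp only [this, ← Finset.sum_div, hsize i0]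
      field_simp
    rw [this, Real.sqrt_one]
  have hwval : (∑ i : Fin r, (∑ j : Fin n, y i j * w j) ^ m) = K ^ m := by
    have hterm : ∀ i : Fin r, (∑ j : Fin n, y i j * w j)
        = (if i = i0 then K else 0) := by
      intro i
      by_cases h : i = i0
      · rw [if_pos h, h]
        have h1 : ∀ j, y i0 j * (y i0 j / K) = y i0 j / K := by
          intro j
          rw [mul_div_assoc', ← sq, hy2]
        have hwj : ∀ j, w j = y i0 j / K := fun j => by rw [hw]
        simp only [hwj]
        calc (∑ j : Fin n, y i0 j * (y i0 j / K)) = ∑ j : Fin n, y i0 j / K := by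
              exact Finset.sum_congr rfl fun j _ => h1 j
          _ = (∑ j : Fin n, y i0 j) / K := by rw [Finset.sum_div]
          _ = (k : ℝ) / K := by rw [hsize i0]
          _ = K := by rw [← hK2]; field_simp
      · simp only [if_neg h]
        have : ∀ j, y i j * w j = 0 := by
          intro j
          rw [hw]
          simp only
          rw [div_eq_mul_inv, ← mul_assoc, hdisj i i0 h j, zero_mul]
        simp [this]
    rw [Finset.sum_congr rfl fun i _ => by rw [hterm i]]
    simp [apply_ite (· ^ m), zero_pow (by omega : m ≠ 0), Finset.sum_ite_eq']
  -- conclude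
  have hmem : K ^ m ∈ {x | ∃ u : EuclideanSpace ℝ (Fin n), ‖u‖ = 1 ∧
      x = |tInner (fun idx : Fin m → Fin n => ∑ i : Fin r, ∏ t : Fin m, y i (idx t))
        (rankOne n m u)|} := by
    refine ⟨w, hwnorm, ?_⟩
    rw [key w, hwval, abs_of_nonneg (pow_nonneg hK0.le m)]
  have hbdd : ∀ x ∈ {x | ∃ u : EuclideanSpace ℝ (Fin n), ‖u‖ = 1 ∧
      x = |tInner (fun idx : Fin m → Fin n => ∑ i : Fin r, ∏ t : Fin m, y i (idx t))
        (rankOne n m u)|}, x ≤ K ^ m := by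
    rintro x ⟨u, hu, rfl⟩
    rw [key u]
    exact ub u hu
  rw [specNorm, ← hKm]
  exact le_antisymm (csSup_le ⟨K ^ m, hmem⟩ hbdd) (le_csSup ⟨K ^ m, hbdd⟩ hmem)
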